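/- Let g : [0,∞) → (0,∞) be decreasing, s : [0,∞) → [0,∞) convex with s(0) = 0 and s > 0 on (0,∞), and n ≥ 2. Then for all x > 0, s'(x) ∫_0^x g(t) s(t)^{n-2} dt > g(x) s(x)^{n-1}/(n-1). -/

import Mathlib

open Real Set MeasureTheory

/-- If `g` is decreasing and positive, `s` is convex with `s(0)=0`, `s>0` on `(0,∞)`,
then for all `x > 0` and `n ≥ 2`:
`s'(x) ∫_0^x g(t) s(t)^{n-2} dt > g(x) s(x)^{n-1}/(n-1)`. -/
theorem stmt12 (n : ℕ) (hn : 2 ≤ n)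
    (g s : ℝ → ℝ)
    (hg : StrictAntiOn g (Set.Ici 0)) (hgpos : ∀ t ≥ (0:ℝ), 0 < g t)
    (hs : ConvexOn ℝ (Set.Ici 0) s) (hs0 : s 0 = 0) (hspos : ∀ t > (0:ℝ), 0 < s t)
    (hsd : ∀ t > (0:ℝ), DifferentiableAt ℝ s t)
    (x : ℝ) (hx : 0 < x) :
    deriv s x * ∫ t in (0:ℝ)..x, g t * s t ^ (n - 2) >
      g x * s x ^ (n - 1) / ((n : ℝ) - 1) := by
  obtain ⟨m, rfl⟩ : ∃ m, n = m + 2 := ⟨n - 2, by omega⟩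
  clear hn
  simp only [Nat.add_sub_cancel, show m + 2 - 1 = m + 1 from rfl]
  set a := deriv s x with ha_def
  have hsx : 0 < s x := hspos x hx
  have hgx : 0 < g x := hgpos x hx.le
  -- convexity combination bound
  have hcomb : ∀ t u : ℝ, 0 ≤ t → t ≤ u → 0 < u → s t ≤ t / u * s u := by
    intro t u ht htu hu
    have h2 : 0 ≤ 1 - t / u := by
      have : t / u ≤ 1 := (div_le_one hu).2 htu
      linarith
    have h3 : 0 ≤ t / u := by positivity
    have h := hs.2 (mem_Ici.2 (le_refl (0:ℝ))) (mem_Ici.2 hu.le) h2 h3 (by ring)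
    rw [smul_eq_mul, smul_eq_mul, smul_eq_mul, smul_eq_mul] at h
    have ht' : (1 - t / u) * 0 + t / u * u = t := by field_simp; ring
    rw [ht', hs0] at h
    linarith
  have hsnn : ∀ t, 0 ≤ t → 0 ≤ s t := by
    intro t ht
    rcases ht.eq_or_lt with rfl | h
    · simp [hs0]
    · exact (hspos t h).le
  have hmono : ∀ t u : ℝ, 0 ≤ t → t ≤ u → s t ≤ s u := by
    intro t u ht htu
    rcases (ht.trans htu).eq_or_lt with h | hu
    · have h1 : t = 0 := le_antisymm (htu.trans h.symm.le) ht
      have h2 : u = 0 := h.symm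
      rw [h1, h2]
    · calc s t ≤ t / u * s u := hcomb t u ht htu hu
        _ ≤ 1 * s u := by
            apply mul_le_mul_of_nonneg_right ((div_le_one hu).2 htu) (hsnn u hu.le)
        _ = s u := one_mul _
  -- slope bound: s x / x ≤ a, and deriv nonneg, monotone
  have hslope : ∀ t : ℝ, 0 < t → s t / t ≤ deriv s t := by
    intro t ht
    have h := hs.slope_le_deriv (mem_Ici.2 (le_refl (0:ℝ))) (mem_Ici.2 ht.le) ht (hsd t ht)
    rwa [slope_def_field, hs0, sub_zero, sub_zero] at h
  have hapos : 0 < a := lt_of_lt_of_le (div_pos hsx hx) (hslope x hx)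
  have hsIoi : ConvexOn ℝ (Ioi 0) s := hs.subset Ioi_subset_Ici_self (convex_Ioi 0)
  have hdmono : MonotoneOn (deriv s) (Ioi 0) := hsIoi.monotoneOn_deriv (fun t ht => hsd t ht)
  have hdnn : ∀ t : ℝ, 0 < t → 0 ≤ deriv s t := fun t ht =>
    le_trans (div_nonneg (hsnn t ht.le) ht.le) (hslope t ht)
  have hdle : ∀ t : ℝ, 0 < t → t ≤ x → deriv s t ≤ a := fun t ht htx =>
    hdmono ht hx htx
  -- continuity of s on [0,x]
  have hscont : ContinuousOn s (Icc 0 x) := by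
    intro t ht
    rcases ht.1.eq_or_lt with h | h
    · subst h
      have htend : Filter.Tendsto s (nhdsWithin 0 (Icc 0 x)) (nhds 0) := by
        apply squeeze_zero'
        · filter_upwards [self_mem_nhdsWithin] with u hu
          exact hsnn u hu.1
        · filter_upwards [self_mem_nhdsWithin] with u hu
          calc s u ≤ u / x * s x := hcomb u x hu.1 hu.2 hx
            _ = s x / x * u := by ring
        · have : Filter.Tendsto (fun u : ℝ => s x / x * u) (nhdsWithin 0 (Icc 0 x))
              (nhds (s x / x * 0)) :=
            ((continuous_const.mul continuous_id).tendsto 0).mono_left nhdsWithin_le_nhds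
          simpa using this
      unfold ContinuousWithinAt
      rwa [hs0]
    · exact (hsd t h).continuousAt.continuousWithinAt
  have hsm_cont : ContinuousOn (fun t => s t ^ m) (Ioc 0 x) := fun t ht =>
    ((hsd t ht.1).continuousAt.continuousWithinAt).pow m
  -- integrability of s^m
  have hsmmono : MonotoneOn (fun t => s t ^ m) (uIcc 0 x) := by
    rw [uIcc_of_le hx.le]
    intro t ht u hu htu
    exact pow_le_pow_left₀ (hsnn t ht.1) (hmono t u ht.1 htu) m
  have hI2int : IntervalIntegrable (fun t => s t ^ m) volume 0 x := hsmmono.intervalIntegrable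
  -- FTC: ∫ f' = s x ^ (m+1)
  set f' := fun t : ℝ => ((m : ℝ) + 1) * s t ^ m * deriv s t with hf'def
  have hderivF : ∀ t ∈ Ioo (0:ℝ) x, HasDerivAt (fun u => s u ^ (m + 1)) (f' t) t := by
    intro t ht
    have h := (hsd t ht.1).hasDerivAt.pow (m + 1)
    simp [Nat.add_sub_cancel] at h
    simp only [hf'def]
    exact h
  have hf'int : IntervalIntegrable f' volume 0 x := by
    rw [intervalIntegrable_iff_integrableOn_Ioc_of_le hx.le]
    have hmeas : AEStronglyMeasurable f' (volume.restrict (Ioc 0 x)) := by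
      exact (aestronglyMeasurable_const.mul
        (hsm_cont.aestronglyMeasurable measurableSet_Ioc)).mul
        ((measurable_deriv s).aestronglyMeasurable.restrict)
    apply MeasureTheory.Integrable.mono'
      (integrableOn_const measure_Ioc_lt_top.ne
        : IntegrableOn (fun _ : ℝ => ((m:ℝ)+1) * s x ^ m * a) (Ioc 0 x) volume) hmeas
    refine (MeasureTheory.ae_restrict_iff' measurableSet_Ioc).2
      (Filter.Eventually.of_forall fun t ht => ?_)
    have h1 : 0 ≤ s t := hsnn t ht.1.le
    have h2 : s t ≤ s x := hmono t x ht.1.le ht.2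
    have h3 : 0 ≤ deriv s t := hdnn t ht.1
    have h4 : deriv s t ≤ a := hdle t ht.1 ht.2
    rw [Real.norm_eq_abs, abs_of_nonneg (by positivity)]
    have h5 : s t ^ m ≤ s x ^ m := pow_le_pow_left₀ h1 h2 m
    have h6 : (0:ℝ) ≤ s t ^ m := pow_nonneg h1 m
    show ((m:ℝ)+1) * s t ^ m * deriv s t ≤ ((m:ℝ)+1) * s x ^ m * a
    have h7 : s t ^ m * deriv s t ≤ s x ^ m * a :=
      mul_le_mul h5 h4 h3 (pow_nonneg (hsnn x hx.le) m)
    calc ((m:ℝ)+1) * s t ^ m * deriv s t = ((m:ℝ)+1) * (s t ^ m * deriv s t) := by ring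
      _ ≤ ((m:ℝ)+1) * (s x ^ m * a) := by
          apply mul_le_mul_of_nonneg_left h7 (by positivity)
      _ = ((m:ℝ)+1) * s x ^ m * a := by ring
  have hFTC : ∫ t in (0:ℝ)..x, f' t = s x ^ (m + 1) := by
    have h := intervalIntegral.integral_eq_sub_of_hasDerivAt_of_le hx.le
      (hscont.pow (m + 1)) hderivF hf'int
    rw [h, Pi.pow_apply, Pi.pow_apply, hs0, zero_pow (Nat.succ_ne_zero m), sub_zero]
  -- Step 2: s x ^ (m+1) ≤ (m+1) * a * ∫ s^m
  have hstep2 : s x ^ (m + 1) ≤ ((m : ℝ) + 1) * a * ∫ t in (0:ℝ)..x, s t ^ m := by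
    rw [← hFTC, ← intervalIntegral.integral_const_mul]
    apply intervalIntegral.integral_mono_ae_restrict hx.le hf'int (hI2int.const_mul _)
    rw [Filter.EventuallyLE, MeasureTheory.Measure.restrict_congr_set
      (Ioc_ae_eq_Icc (α := ℝ) (a := 0) (b := x)).symm]
    refine (MeasureTheory.ae_restrict_iff' measurableSet_Ioc).2
      (Filter.Eventually.of_forall fun t ht => ?_)
    have h4 : deriv s t ≤ a := hdle t ht.1 ht.2
    have h6 : (0:ℝ) ≤ s t ^ m := pow_nonneg (hsnn t ht.1.le) m
    have : ((m:ℝ)+1) * s t ^ m * deriv s t ≤ ((m:ℝ)+1) * s t ^ m * a := by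
      apply mul_le_mul_of_nonneg_left h4 (by positivity)
    calc f' t ≤ ((m:ℝ)+1) * s t ^ m * a := this
      _ = ((m:ℝ)+1) * a * s t ^ m := by ring
  -- Step 1: ∫ g * s^m > g x * ∫ s^m
  have hganti : AntitoneOn g (Icc 0 x) := hg.antitoneOn.mono Icc_subset_Ici_self
  have hgint : IntervalIntegrable g volume 0 x := by
    apply AntitoneOn.intervalIntegrable
    rwa [uIcc_of_le hx.le]
  have hGint : IntervalIntegrable (fun t => g t * s t ^ m) volume 0 x := by
    rw [intervalIntegrable_iff_integrableOn_Ioc_of_le hx.le]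
    have hmeas : AEStronglyMeasurable (fun t => g t * s t ^ m)
        (volume.restrict (Ioc 0 x)) := by
      have := (hgint.1).aestronglyMeasurable
      exact this.mul (hsm_cont.aestronglyMeasurable measurableSet_Ioc)
    apply MeasureTheory.Integrable.mono'
      (integrableOn_const measure_Ioc_lt_top.ne
        : IntegrableOn (fun _ : ℝ => g 0 * s x ^ m) (Ioc 0 x) volume) hmeas
    refine (MeasureTheory.ae_restrict_iff' measurableSet_Ioc).2
      (Filter.Eventually.of_forall fun t ht => ?_)
    have h1 : 0 ≤ s t := hsnn t ht.1.le
    have h2 : s t ^ m ≤ s x ^ m := pow_le_pow_left₀ h1 (hmono t x ht.1.le ht.2) m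
    have h3 : 0 < g t := hgpos t ht.1.le
    have h4 : g t ≤ g 0 := hganti ⟨le_refl 0, hx.le⟩ ⟨ht.1.le, ht.2⟩ ht.1.le
    rw [Real.norm_eq_abs, abs_of_nonneg (by positivity)]
    nlinarith [pow_nonneg h1 m]
  have hDint : IntervalIntegrable (fun t => (g t - g x) * s t ^ m) volume 0 x := by
    have h := hGint.sub (hI2int.const_mul (g x))
    convert h using 2 with t
    ring
  set y := x / 2 with hy_def
  have hy0 : 0 < y := by positivity
  have hyx : y < x := by simp [hy_def]; linarith
  have hsub1 : uIcc (0:ℝ) y ⊆ uIcc 0 x := by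
    rw [uIcc_of_le hy0.le, uIcc_of_le hx.le]
    exact Icc_subset_Icc (le_refl 0) hyx.le
  have hsub2 : uIcc y x ⊆ uIcc 0 x := by
    rw [uIcc_of_le hyx.le, uIcc_of_le hx.le]
    exact Icc_subset_Icc hy0.le (le_refl x)
  have hsplit : ∫ t in (0:ℝ)..x, (g t - g x) * s t ^ m =
      (∫ t in (0:ℝ)..y, (g t - g x) * s t ^ m) + ∫ t in y..x, (g t - g x) * s t ^ m :=
    (intervalIntegral.integral_add_adjacent_intervals (hDint.mono_set hsub1)
      (hDint.mono_set hsub2)).symm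
  have hpart2 : 0 ≤ ∫ t in y..x, (g t - g x) * s t ^ m := by
    apply intervalIntegral.integral_nonneg hyx.le
    intro u hu
    have h1 : 0 ≤ u := hy0.le.trans hu.1
    have h2 : g x ≤ g u := hganti ⟨h1, hu.2⟩ ⟨hx.le, le_refl x⟩ hu.2
    have h3 : (0:ℝ) ≤ s u ^ m := pow_nonneg (hsnn u h1) m
    nlinarith
  have hIypos : 0 < ∫ t in (0:ℝ)..y, s t ^ m := by
    apply intervalIntegral.intervalIntegral_pos_of_pos_on (hI2int.mono_set hsub1)
    · intro u hu
      exact pow_pos (hspos u hu.1) m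
    · exact hy0
  have hpart1 : (g y - g x) * ∫ t in (0:ℝ)..y, s t ^ m ≤
      ∫ t in (0:ℝ)..y, (g t - g x) * s t ^ m := by
    rw [← intervalIntegral.integral_const_mul]
    apply intervalIntegral.integral_mono_on hy0.le
      ((hI2int.mono_set hsub1).const_mul _) (hDint.mono_set hsub1)
    intro u hu
    have h2 : g y ≤ g u := hganti ⟨hu.1, hu.2.trans hyx.le⟩ ⟨hy0.le, hyx.le⟩ hu.2
    have h3 : (0:ℝ) ≤ s u ^ m := pow_nonneg (hsnn u hu.1) m
    nlinarith
  have hgyx : g x < g y := hg (mem_Ici.2 hy0.le) (mem_Ici.2 hx.le) hyx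
  have hstep1 : g x * (∫ t in (0:ℝ)..x, s t ^ m) < ∫ t in (0:ℝ)..x, g t * s t ^ m := by
    have hD : 0 < ∫ t in (0:ℝ)..x, (g t - g x) * s t ^ m := by
      rw [hsplit]
      have : 0 < (g y - g x) * ∫ t in (0:ℝ)..y, s t ^ m := by
        apply mul_pos (by linarith) hIypos
      linarith [hpart1, hpart2]
    have heq : ∫ t in (0:ℝ)..x, (g t - g x) * s t ^ m =
        (∫ t in (0:ℝ)..x, g t * s t ^ m) - g x * ∫ t in (0:ℝ)..x, s t ^ m := by
      rw [← intervalIntegral.integral_const_mul, ← intervalIntegral.integral_sub hGint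
        (hI2int.const_mul _)]
      congr 1
      ext t
      ring
    linarith [heq ▸ hD]
  -- assemble
  have hcast : ((m + 2 : ℕ) : ℝ) - 1 = (m : ℝ) + 1 := by push_cast; ring
  rw [hcast, gt_iff_lt, div_lt_iff₀ (by positivity : (0:ℝ) < (m:ℝ) + 1)]
  have hI2nn : 0 ≤ ∫ t in (0:ℝ)..x, s t ^ m :=
    intervalIntegral.integral_nonneg hx.le fun u hu => pow_nonneg (hsnn u hu.1) m
  have key1 : a * (g x * ∫ t in (0:ℝ)..x, s t ^ m) < a * ∫ t in (0:ℝ)..x, g t * s t ^ m :=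
    mul_lt_mul_of_pos_left hstep1 hapos
  have key2 : g x * s x ^ (m + 1) ≤ g x * (((m:ℝ)+1) * a * ∫ t in (0:ℝ)..x, s t ^ m) :=
    mul_le_mul_of_nonneg_left hstep2 hgx.le
  nlinarith
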